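/- Let π : S → R[z] be the k-algebra homomorphism with π(x_i) = x_i z, π(y_j) = y_j z, and π(T_ℓ) = f_ℓ (where R[z] is a polynomial ring in one new variable z over R). Then ker ψ = ker π; that is, the defining ideal of the Rees algebra R[It] coincides with the toric ideal of the monomial subring k[C(G)] of the cone graph C(G). -/

import Mathlib

open MvPolynomial

section ConeAux

/-- Target variable type: the vertex variables together with the extra variable `t`/`z`. -/
abbrev TVar (n m : ℕ) := Sum (Sum (Fin n) (Fin m)) Unit

variable (n m : ℕ)

/-- weights: `1` on vertex variables, `-3` on the extra variable. -/
def coneW : TVar n m → ℤ := fun s => match s with | Sum.inl _ => 1 | Sum.inr _ => -3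

/-- The weight functional on integer exponent vectors. -/
noncomputable def coneL : (TVar n m →₀ ℤ) →+ ℤ :=
  Finsupp.liftAddHom fun s => zmultiplesHom ℤ (coneW n m s)

/-- The key injective additive map on exponent vectors relating `ψ` and `π`. -/
noncomputable def coneBeta : (TVar n m →₀ ℤ) →+ (TVar n m →₀ ℤ) :=
  AddMonoidHom.id _ + (Finsupp.singleAddHom (Sum.inr ())).comp (coneL n m)

lemma coneL_single (s : TVar n m) (c : ℤ) :
    coneL n m (Finsupp.single s c) = c * coneW n m s := by
  simp [coneL, Finsupp.liftAddHom_apply_single, zmultiplesHom_apply, smul_eq_mul]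

lemma coneBeta_apply (e : TVar n m →₀ ℤ) :
    coneBeta n m e = e + Finsupp.single (Sum.inr ()) (coneL n m e) := rfl

lemma coneBeta_injective : Function.Injective (coneBeta n m) := by
  rw [injective_iff_map_eq_zero]
  intro e he
  have h1 : ∀ v, e (Sum.inl v) = 0 := by
    intro v
    have := DFunLike.congr_fun he (Sum.inl v)
    simpa [coneBeta_apply, Finsupp.single_apply] using this
  have h2 : e = Finsupp.single (Sum.inr ()) (e (Sum.inr ())) := by
    ext s
    cases s with
    | inl v => simp [h1 v, Finsupp.single_apply]
    | inr u => cases u; simp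
  have hL : coneL n m e = e (Sum.inr ()) * (-3) := by
    conv_lhs => rw [h2]
    simp [coneL_single, coneW]
  have h3 := DFunLike.congr_fun he (Sum.inr ())
  rw [coneBeta_apply] at h3
  simp [hL, Finsupp.add_apply, Finsupp.single_apply] at h3
  have h4 : e (Sum.inr ()) = 0 := by omega
  rw [h2, h4, Finsupp.single_zero]

/-- Coefficientwise cast `ℕ → ℤ` of exponent vectors. -/
noncomputable def natCastExp : (TVar n m →₀ ℕ) →+ (TVar n m →₀ ℤ) :=
  Finsupp.mapRange.addMonoidHom (Nat.castAddMonoidHom ℤ)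

lemma natCastExp_injective : Function.Injective (natCastExp n m) :=
  Finsupp.mapRange_injective _ (by simp) Nat.cast_injective

lemma natCastExp_single (s : TVar n m) (c : ℕ) :
    natCastExp n m (Finsupp.single s c) = Finsupp.single s (c : ℤ) := by
  simp [natCastExp]

/-- The composite exponent map used on the `ψ` side. -/
noncomputable def coneG1 : (TVar n m →₀ ℕ) →+ (TVar n m →₀ ℤ) :=
  (coneBeta n m).comp (natCastExp n m)

lemma coneG1_injective : Function.Injective (coneG1 n m) :=
  (coneBeta_injective n m).comp (natCastExp_injective n m)

lemma coneG1_single (s : TVar n m) :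
    coneG1 n m (Finsupp.single s 1) =
      Finsupp.single s 1 + Finsupp.single (Sum.inr ()) (coneW n m s) := by
  simp [coneG1, natCastExp_single, coneBeta_apply, coneL_single]

end ConeAux

/-- The algebra map on (Laurent) monomial algebras induced by an exponent map. -/
noncomputable def coneTheta (k : Type*) [CommSemiring k] (n m : ℕ)
    (g : (TVar n m →₀ ℕ) →+ (TVar n m →₀ ℤ)) :
    MvPolynomial (TVar n m) k →ₐ[k] AddMonoidAlgebra k (TVar n m →₀ ℤ) :=
  AddMonoidAlgebra.mapDomainAlgHom k k g

lemma coneTheta_injective (k : Type*) [CommSemiring k] (n m : ℕ)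
    (g : (TVar n m →₀ ℕ) →+ (TVar n m →₀ ℤ)) (hg : Function.Injective g) :
    Function.Injective (coneTheta k n m g) := by
  intro a b hab
  exact AddMonoidAlgebra.mapDomain_injective hg hab

lemma coneTheta_X (k : Type*) [CommSemiring k] (n m : ℕ)
    (g : (TVar n m →₀ ℕ) →+ (TVar n m →₀ ℤ)) (v : TVar n m) :
    coneTheta k n m g (X v) =
      AddMonoidAlgebra.single (g (Finsupp.single v 1)) (1 : k) := by
  show AddMonoidAlgebra.mapDomain g (X v : MvPolynomial (TVar n m) k) = _
  rw [X, ← single_eq_monomial]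
  exact AddMonoidAlgebra.mapDomain_single

/-- The `k`-algebra map `ψ : S = k[x,y,T] → R[t]` presenting the Rees algebra of the
edge ideal of the bipartite graph whose edges are given by `edge : E → Fin n × Fin m`
(the edge indexed by `e` joins `x_{(edge e).1}` and `y_{(edge e).2}`).
Here the variables of `S` are indexed by `Sum (Sum (Fin n) (Fin m)) E` and the variables
of `R[t]` by `Sum (Sum (Fin n) (Fin m)) Unit` (`Sum.inr ()` playing the role of `t`). -/
noncomputable def reesPsi (k : Type*) [CommSemiring k] (n m : ℕ) {E : Type*}
    (edge : E → Fin n × Fin m) :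
    MvPolynomial (Sum (Sum (Fin n) (Fin m)) E) k →ₐ[k]
      MvPolynomial (Sum (Sum (Fin n) (Fin m)) Unit) k :=
  aeval fun s =>
    match s with
    | Sum.inl v => X (Sum.inl v)
    | Sum.inr e =>
        X (Sum.inl (Sum.inl (edge e).1)) * X (Sum.inl (Sum.inr (edge e).2)) * X (Sum.inr ())


/-- The `k`-algebra map `π : S → R[z]` onto the monomial subring of the cone graph `C(G)`:
`x_i ↦ x_i z`, `y_j ↦ y_j z`, `T_e ↦ x y` (the product of the endpoints of the edge `e`).
Here `Sum.inr ()` plays the role of the cone vertex variable `z`. -/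
noncomputable def conePi (k : Type*) [CommSemiring k] (n m : ℕ) {E : Type*}
    (edge : E → Fin n × Fin m) :
    MvPolynomial (Sum (Sum (Fin n) (Fin m)) E) k →ₐ[k]
      MvPolynomial (Sum (Sum (Fin n) (Fin m)) Unit) k :=
  aeval fun s =>
    match s with
    | Sum.inl v => X (Sum.inl v) * X (Sum.inr ())
    | Sum.inr e => X (Sum.inl (Sum.inl (edge e).1)) * X (Sum.inl (Sum.inr (edge e).2))

/-- The commuting square: `Θ₁ ∘ ψ = Θ₂ ∘ π`, where both `Θ`'s are injective. -/
lemma cone_square (k : Type*) [CommSemiring k] (n m : ℕ) {E : Type*}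
    (edge : E → Fin n × Fin m) :
    (coneTheta k n m (coneG1 n m)).comp (reesPsi k n m edge) =
      (coneTheta k n m (natCastExp n m)).comp (conePi k n m edge) := by
  apply MvPolynomial.algHom_ext
  intro s
  cases s with
  | inl v =>
    simp only [AlgHom.comp_apply, reesPsi, conePi, aeval_X, map_mul, coneTheta_X,
      coneG1_single, natCastExp_single, AddMonoidAlgebra.single_mul_single, one_mul, coneW,
      Nat.cast_one]
  | inr e =>
    simp only [AlgHom.comp_apply, reesPsi, conePi, aeval_X, map_mul, coneTheta_X,
      coneG1_single, natCastExp_single, AddMonoidAlgebra.single_mul_single, one_mul, coneW,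
      Nat.cast_one]
    congr 1
    ext a
    rcases a with (w | u) <;>
      simp [Finsupp.add_apply, Finsupp.single_apply]

/-- `ker ψ = ker π`: the defining ideal of the Rees algebra `R[It]`
coincides with the toric ideal of the monomial subring `k[C(G)]` of the cone graph. -/
theorem ker_reesPsi_eq_ker_conePi (k : Type*) [Field k] (n m q : ℕ)
    (edge : Fin q → Fin n × Fin m) (hedge : Function.Injective edge) :
    RingHom.ker (reesPsi k n m edge) = RingHom.ker (conePi k n m edge) := by
  ext f
  have hsq := AlgHom.congr_fun (cone_square k n m edge) f
  simp only [AlgHom.comp_apply] at hsq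
  simp only [RingHom.mem_ker]
  constructor
  · intro h
    apply coneTheta_injective k n m (natCastExp n m) (natCastExp_injective n m)
    rw [← hsq, h, map_zero, map_zero]
  · intro h
    apply coneTheta_injective k n m (coneG1 n m) (coneG1_injective n m)
    rw [hsq, h, map_zero, map_zero]
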